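/- For p, q in the Poincaré ball of radius r, the triangle inequality through the origin gives d_D(p, q) ≤ d_D(p, 0) + d_D(0, q), i.e., 2r·arctanh(||(−p)⊕q||/r) ≤ 2r·arctanh(||p||/r) + 2r·arctanh(||q||/r). -/

import Mathlib

noncomputable def artanh (x : ℝ) : ℝ := (1 / 2) * Real.log ((1 + x) / (1 - x))

noncomputable def mobiusAdd (r : ℝ) {n : ℕ} (a b : EuclideanSpace ℝ (Fin n)) :
    EuclideanSpace ℝ (Fin n) :=
  (1 / (1 + 2 * (inner ℝ a b : ℝ) / r ^ 2 + ‖a‖ ^ 2 * ‖b‖ ^ 2 / r ^ 4)) •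
    ((1 + 2 * (inner ℝ a b : ℝ) / r ^ 2 + ‖b‖ ^ 2 / r ^ 2) • a + (1 - ‖a‖ ^ 2 / r ^ 2) • b)

noncomputable def pDist (r : ℝ) {n : ℕ} (p q : EuclideanSpace ℝ (Fin n)) : ℝ :=
  2 * r * artanh (‖mobiusAdd r (-p) q‖ / r)

lemma artanh_le_artanh {x y : ℝ} (hx : 0 ≤ x) (hxy : x ≤ y) (hy : y < 1) :
    artanh x ≤ artanh y := by
  unfold artanh
  have h1 : (0:ℝ) < 1 - y := by linarith
  have h2 : (0:ℝ) < 1 - x := by linarith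
  have hpos : (0:ℝ) < (1 + x) / (1 - x) := by positivity
  have hle : (1 + x) / (1 - x) ≤ (1 + y) / (1 - y) := by
    rw [div_le_div_iff₀ h2 h1]; nlinarith
  have := Real.log_le_log hpos hle
  linarith

lemma artanh_add {x y : ℝ} (hx : 0 ≤ x) (hx1 : x < 1) (hy : 0 ≤ y) (hy1 : y < 1) :
    artanh x + artanh y = artanh ((x + y) / (1 + x * y)) := by
  unfold artanh
  have h1 : (0:ℝ) < 1 - x := by linarith
  have h2 : (0:ℝ) < 1 - y := by linarith
  have h3 : (0:ℝ) < 1 + x * y := by nlinarith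
  have e1 : 1 + (x + y) / (1 + x * y) = (1 + x) * (1 + y) / (1 + x * y) := by
    field_simp; ring
  have e2 : 1 - (x + y) / (1 + x * y) = (1 - x) * (1 - y) / (1 + x * y) := by
    field_simp; ring
  have key : (1 + (x + y) / (1 + x * y)) / (1 - (x + y) / (1 + x * y))
      = ((1 + x) / (1 - x)) * ((1 + y) / (1 - y)) := by
    rw [e1, e2, div_div_div_cancel_right₀]
    · field_simp [h1.ne', h2.ne']
    · exact h3.ne'
  rw [key, Real.log_mul (by positivity) (by positivity)]
  ring

lemma mobiusAdd_zero_right (r : ℝ) {n : ℕ} (a : EuclideanSpace ℝ (Fin n)) :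
    mobiusAdd r a 0 = a := by
  simp [mobiusAdd]

lemma mobiusAdd_zero_left (r : ℝ) {n : ℕ} (b : EuclideanSpace ℝ (Fin n)) :
    mobiusAdd r 0 b = b := by
  simp [mobiusAdd]

/-- Scalar algebra: the denominator is positive. -/
lemma mobius_den_pos {r s t c : ℝ} (hr : 0 < r) (hc' : -(s * t) ≤ c)
    (hst : s * t < r ^ 2) :
    0 < 1 + 2 * c / r ^ 2 + s ^ 2 * t ^ 2 / r ^ 4 := by
  have hr4 : (0:ℝ) < r ^ 4 := by positivity
  have heq : 1 + 2 * c / r ^ 2 + s ^ 2 * t ^ 2 / r ^ 4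
      = (r ^ 4 + 2 * c * r ^ 2 + s ^ 2 * t ^ 2) / r ^ 4 := by
    field_simp
  rw [heq]
  apply div_pos _ hr4
  have h1 : 0 < r ^ 2 - s * t := by linarith
  nlinarith [mul_pos h1 h1, mul_nonneg (by positivity : (0:ℝ) ≤ 2 * r ^ 2)
    (by linarith : 0 ≤ c + s * t)]

/-- Scalar algebra: the squared-norm identity. -/
lemma mobius_sq_identity {r s t c : ℝ} (hr : r ≠ 0)
    (hD : 1 + 2 * c / r ^ 2 + s ^ 2 * t ^ 2 / r ^ 4 ≠ 0) :
    (1 / (1 + 2 * c / r ^ 2 + s ^ 2 * t ^ 2 / r ^ 4)) ^ 2 *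
      ((1 + 2 * c / r ^ 2 + t ^ 2 / r ^ 2) ^ 2 * s ^ 2
        + 2 * ((1 + 2 * c / r ^ 2 + t ^ 2 / r ^ 2) * (1 - s ^ 2 / r ^ 2)) * c
        + (1 - s ^ 2 / r ^ 2) ^ 2 * t ^ 2)
    = (s ^ 2 + 2 * c + t ^ 2) / (1 + 2 * c / r ^ 2 + s ^ 2 * t ^ 2 / r ^ 4) := by
  rw [one_div, inv_pow, inv_mul_eq_div, div_eq_div_iff (pow_ne_zero 2 hD) hD]
  field_simp
  ring

lemma norm_mobiusAdd_sq (r : ℝ) (hr : 0 < r) {n : ℕ} (a b : EuclideanSpace ℝ (Fin n))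
    (ha : ‖a‖ < r) (hb : ‖b‖ < r) :
    ‖mobiusAdd r a b‖ ^ 2 =
      (‖a‖ ^ 2 + 2 * (inner ℝ a b : ℝ) + ‖b‖ ^ 2) /
        (1 + 2 * (inner ℝ a b : ℝ) / r ^ 2 + ‖a‖ ^ 2 * ‖b‖ ^ 2 / r ^ 4) := by
  have hca : |(inner ℝ a b : ℝ)| ≤ ‖a‖ * ‖b‖ := abs_real_inner_le_norm a b
  have hcs' : -(‖a‖ * ‖b‖) ≤ (inner ℝ a b : ℝ) := neg_le_of_abs_le hca
  have hna : 0 ≤ ‖a‖ := norm_nonneg a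
  have hnb : 0 ≤ ‖b‖ := norm_nonneg b
  have hst : ‖a‖ * ‖b‖ < r ^ 2 := by nlinarith
  have hD := mobius_den_pos (s := ‖a‖) (t := ‖b‖) hr hcs' hst
  have hN : ‖(1 + 2 * (inner ℝ a b : ℝ) / r ^ 2 + ‖b‖ ^ 2 / r ^ 2) • a
        + (1 - ‖a‖ ^ 2 / r ^ 2) • b‖ ^ 2
      = (1 + 2 * (inner ℝ a b : ℝ) / r ^ 2 + ‖b‖ ^ 2 / r ^ 2) ^ 2 * ‖a‖ ^ 2
        + 2 * ((1 + 2 * (inner ℝ a b : ℝ) / r ^ 2 + ‖b‖ ^ 2 / r ^ 2)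
            * (1 - ‖a‖ ^ 2 / r ^ 2)) * (inner ℝ a b : ℝ)
        + (1 - ‖a‖ ^ 2 / r ^ 2) ^ 2 * ‖b‖ ^ 2 := by
    rw [norm_add_sq_real, norm_smul, norm_smul, real_inner_smul_left, real_inner_smul_right,
      Real.norm_eq_abs, Real.norm_eq_abs, mul_pow, mul_pow, sq_abs, sq_abs]
    ring
  rw [mobiusAdd, norm_smul, Real.norm_eq_abs, mul_pow, sq_abs, hN]
  exact mobius_sq_identity hr.ne' hD.ne'

/-- Scalar algebra: the key inequality on squares. -/
lemma mobius_sq_le {r s t c : ℝ} (hr : 0 < r) (hs : 0 ≤ s) (ht : 0 ≤ t)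
    (hsr : s < r) (htr : t < r) (hc : c ≤ s * t) (hc' : -(s * t) ≤ c) :
    (s ^ 2 + 2 * c + t ^ 2) / (1 + 2 * c / r ^ 2 + s ^ 2 * t ^ 2 / r ^ 4)
      ≤ (r ^ 2 * (s + t) / (r ^ 2 + s * t)) ^ 2 := by
  have hst : s * t < r ^ 2 := by nlinarith
  have hD := mobius_den_pos (s := s) (t := t) hr hc' hst
  have hden : (0:ℝ) < r ^ 2 + s * t := by positivity
  have heq : 1 + 2 * c / r ^ 2 + s ^ 2 * t ^ 2 / r ^ 4
      = (r ^ 4 + 2 * c * r ^ 2 + s ^ 2 * t ^ 2) / r ^ 4 := by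
    field_simp
  have hD' : (0:ℝ) < r ^ 4 + 2 * c * r ^ 2 + s ^ 2 * t ^ 2 := by
    have := hD; rw [heq] at this
    have hr4 : (0:ℝ) < r ^ 4 := by positivity
    exact (div_pos_iff.mp this).resolve_right (fun h => absurd hr4 (not_lt.2 h.2.le)) |>.1
  rw [heq, div_div_eq_mul_div, div_pow, div_le_div_iff₀ hD' (by positivity)]
  have hkey : 0 ≤ r ^ 4 * ((s * t - c) * ((r - s) * ((r - t)
      * (r ^ 2 + r * s + r * t + s * t)))) := by
    apply mul_nonneg (by positivity)
    apply mul_nonneg (by linarith)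
    apply mul_nonneg (by linarith)
    apply mul_nonneg (by linarith)
    positivity
  nlinarith [hkey]

lemma norm_mobiusAdd_le (r : ℝ) (hr : 0 < r) {n : ℕ} (a b : EuclideanSpace ℝ (Fin n))
    (ha : ‖a‖ < r) (hb : ‖b‖ < r) :
    ‖mobiusAdd r a b‖ ≤ r ^ 2 * (‖a‖ + ‖b‖) / (r ^ 2 + ‖a‖ * ‖b‖) := by
  have hca : |(inner ℝ a b : ℝ)| ≤ ‖a‖ * ‖b‖ := abs_real_inner_le_norm a b
  have hcs : (inner ℝ a b : ℝ) ≤ ‖a‖ * ‖b‖ := le_trans (le_abs_self _) hca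
  have hcs' : -(‖a‖ * ‖b‖) ≤ (inner ℝ a b : ℝ) := neg_le_of_abs_le hca
  have hna : 0 ≤ ‖a‖ := norm_nonneg a
  have hnb : 0 ≤ ‖b‖ := norm_nonneg b
  have hw : 0 ≤ r ^ 2 * (‖a‖ + ‖b‖) / (r ^ 2 + ‖a‖ * ‖b‖) := by positivity
  have hsq : ‖mobiusAdd r a b‖ ^ 2 ≤ (r ^ 2 * (‖a‖ + ‖b‖) / (r ^ 2 + ‖a‖ * ‖b‖)) ^ 2 := by
    rw [norm_mobiusAdd_sq r hr a b ha hb]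
    exact mobius_sq_le hr hna hnb ha hb hcs hcs'
  calc ‖mobiusAdd r a b‖ = Real.sqrt (‖mobiusAdd r a b‖ ^ 2) := by
        rw [Real.sqrt_sq (norm_nonneg _)]
    _ ≤ Real.sqrt ((r ^ 2 * (‖a‖ + ‖b‖) / (r ^ 2 + ‖a‖ * ‖b‖)) ^ 2) :=
        Real.sqrt_le_sqrt hsq
    _ = r ^ 2 * (‖a‖ + ‖b‖) / (r ^ 2 + ‖a‖ * ‖b‖) := Real.sqrt_sq hw

theorem pDist_triangle_through_origin {n : ℕ} (r : ℝ) (hr : 0 < r)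
    (p q : EuclideanSpace ℝ (Fin n)) (hp : ‖p‖ < r) (hq : ‖q‖ < r) :
    pDist r p q ≤ pDist r p 0 + pDist r 0 q := by
  have hnp : 0 ≤ ‖p‖ := norm_nonneg p
  have hnq : 0 ≤ ‖q‖ := norm_nonneg q
  have hx1 : ‖p‖ / r < 1 := (div_lt_one hr).2 hp
  have hy1 : ‖q‖ / r < 1 := (div_lt_one hr).2 hq
  have hx0 : 0 ≤ ‖p‖ / r := by positivity
  have hy0 : 0 ≤ ‖q‖ / r := by positivity
  have h2 : pDist r p 0 = 2 * r * artanh (‖p‖ / r) := by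
    rw [pDist, mobiusAdd_zero_right, norm_neg]
  have h3 : pDist r 0 q = 2 * r * artanh (‖q‖ / r) := by
    rw [pDist, neg_zero, mobiusAdd_zero_left]
  rw [pDist, h2, h3]
  have hnegp : ‖(-p : EuclideanSpace ℝ (Fin n))‖ = ‖p‖ := norm_neg p
  have hbound := norm_mobiusAdd_le r hr (-p) q (by rwa [hnegp]) hq
  rw [hnegp] at hbound
  set w : ℝ := (‖p‖ / r + ‖q‖ / r) / (1 + (‖p‖ / r) * (‖q‖ / r)) with hw
  have hden : (0:ℝ) < r ^ 2 + ‖p‖ * ‖q‖ := by positivity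
  have hweq : w = r ^ 2 * (‖p‖ + ‖q‖) / (r ^ 2 + ‖p‖ * ‖q‖) / r := by
    rw [hw]; field_simp
  have hu : ‖mobiusAdd r (-p) q‖ / r ≤ w := by
    rw [hweq]
    gcongr
  have hw1 : w < 1 := by
    rw [hw, div_lt_one (by positivity)]
    nlinarith [mul_pos (sub_pos.2 hx1) (sub_pos.2 hy1)]
  have hle := artanh_le_artanh (by positivity) hu hw1
  have hadd := artanh_add hx0 hx1 hy0 hy1
  rw [← hw] at hadd
  have := mul_le_mul_of_nonneg_left hle (by positivity : (0:ℝ) ≤ 2 * r)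
  nlinarith [this, hadd]
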